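/- Let G be a finite abelian group, H ≤ G, φ : Ĝ → Ĥ the restriction map, and suppose S ⊆ H ≤ G is formally dual to T ⊆ Ĝ. Then for every y ∈ Ĥ, the multiplicity m(y) = #(φ⁻¹(y) ∩ T) is either 0 or [G:H]. -/

import Mathlib

open scoped Classical

open Finset

private lemma sum10_orth {A : Type*} [AddCommGroup A] [Fintype A] (ψ χ : AddChar A ℂ) :
    ∑ a : A, (ψ * χ⁻¹) a = if ψ = χ then (Fintype.card A : ℂ) else 0 := by
  rw [AddChar.sum_eq_ite]
  congr 1
  rw [show (0 : AddChar A ℂ) = 1 from rfl, mul_inv_eq_one, eq_iff_iff]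

private lemma comp10_mul {G : Type*} [AddCommGroup G] (H : AddSubgroup G) (z w : AddChar G ℂ) :
    (z * w).compAddMonoidHom H.subtype
      = z.compAddMonoidHom H.subtype * w.compAddMonoidHom H.subtype := by
  ext x; simp

private lemma comp10_inv {G : Type*} [AddCommGroup G] (H : AddSubgroup G) (z : AddChar G ℂ) :
    (z⁻¹).compAddMonoidHom H.subtype = (z.compAddMonoidHom H.subtype)⁻¹ := by
  ext x; simp [AddChar.inv_apply]

private lemma ker10_card_le {G : Type*} [AddCommGroup G] [Fintype G] (H : AddSubgroup G) :
    (univ.filter fun z : AddChar G ℂ => z.compAddMonoidHom H.subtype = 1).card ≤ H.index := by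
  set s := univ.filter fun z : AddChar G ℂ => z.compAddMonoidHom H.subtype = 1 with hs
  have : Fintype (G ⧸ H) := Fintype.ofFinite _
  have hmem : ∀ z ∈ s, ∀ x ∈ H, AddChar.toAddMonoidHomEquiv z x = 0 := by
    intro z hz x hx
    have h1 : z.compAddMonoidHom H.subtype = 1 := (Finset.mem_filter.1 hz).2
    have h2 : z x = 1 := by
      have := DFunLike.congr_fun h1 (⟨x, hx⟩ : H)
      simpa using this
    simp [AddChar.toAddMonoidHomEquiv_apply, h2]
  let f : {z // z ∈ s} → AddChar (G ⧸ H) ℂ := fun z =>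
    AddChar.toAddMonoidHomEquiv.symm
      (QuotientAddGroup.lift H (AddChar.toAddMonoidHomEquiv z.1) (hmem z.1 z.2))
  have hf : Function.Injective f := by
    intro z₁ z₂ h
    have h' := AddChar.toAddMonoidHomEquiv.symm.injective h
    apply Subtype.ext
    apply AddChar.toAddMonoidHomEquiv.injective
    ext x
    have := DFunLike.congr_fun h' (QuotientAddGroup.mk x)
    exact this
  calc s.card = Fintype.card {z // z ∈ s} := (Fintype.card_coe s).symm
    _ ≤ Fintype.card (AddChar (G ⧸ H) ℂ) := Fintype.card_le_of_injective f hf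
    _ = Fintype.card (G ⧸ H) := AddChar.card_eq
    _ = H.index := by rw [AddSubgroup.index, Nat.card_eq_fintype_card]

private lemma fiber10_card_le {G : Type*} [AddCommGroup G] [Fintype G] (H : AddSubgroup G)
    (y : AddChar H ℂ) :
    (univ.filter fun z : AddChar G ℂ => z.compAddMonoidHom H.subtype = y).card ≤ H.index := by
  refine le_trans ?_ (ker10_card_le H)
  rcases (univ.filter fun z : AddChar G ℂ =>
      z.compAddMonoidHom H.subtype = y).eq_empty_or_nonempty with h | ⟨z₀, hz₀⟩
  · simp [h]
  · have hz₀' : z₀.compAddMonoidHom H.subtype = y := (Finset.mem_filter.1 hz₀).2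
    apply Finset.card_le_card_of_injOn (fun z => z * z₀⁻¹)
    · intro z hz
      have hz' : z.compAddMonoidHom H.subtype = y := (Finset.mem_filter.1 hz).2
      simp only [Finset.mem_coe, Finset.mem_filter, Finset.mem_univ, true_and]
      rw [comp10_mul, comp10_inv, hz', hz₀', mul_inv_cancel]
    · intro a _ b _ hab
      exact mul_right_cancel hab

theorem stmt_10 {G : Type*} [AddCommGroup G] [Fintype G] (H : AddSubgroup G)
    (S : Finset G) (T : Finset (AddChar G ℂ))
    (hS : S.Nonempty) (hSH : ∀ v ∈ S, v ∈ H)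
    (hdual : ∀ x : G,
      ‖∑ w ∈ T, w x‖ ^ 2 =
        (T.card : ℝ) ^ 2 / (S.card : ℝ) *
          ((S ×ˢ S).filter fun p => x = p.1 - p.2).card) :
    ∀ y : AddChar H ℂ,
      (T.filter fun z => z.compAddMonoidHom H.subtype = y).card = 0 ∨
      (T.filter fun z => z.compAddMonoidHom H.subtype = y).card = H.index := by
  intro y₀
  rcases T.eq_empty_or_nonempty with rfl | hT
  · left; simp
  set φ : AddChar G ℂ → AddChar H ℂ := fun z => z.compAddMonoidHom H.subtype with hφ
  set m : AddChar H ℂ → ℕ := fun y => (T.filter fun z => φ z = y).card with hm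
  have hS0 : (S.card : ℝ) ≠ 0 := Nat.cast_ne_zero.2 hS.card_pos.ne'
  have hT0 : (T.card : ℕ) ≠ 0 := hT.card_pos.ne'
  -- the multiplicity is at most the index
  have hle : ∀ y, m y ≤ H.index := by
    intro y
    refine le_trans (Finset.card_le_card
      (Finset.filter_subset_filter _ (Finset.subset_univ T))) (fiber10_card_le H y)
  -- |F x|² as a double sum of characters
  have habs : ∀ x : G, ((‖∑ w ∈ T, w x‖ ^ 2 : ℝ) : ℂ) =
      ∑ w ∈ T, ∑ w' ∈ T, (w * w'⁻¹) x := by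
    intro x
    rw [Complex.sq_norm]
    rw [show ((Complex.normSq (∑ w ∈ T, w x) : ℝ) : ℂ)
        = (∑ w ∈ T, w x) * (starRingEnd ℂ) (∑ w ∈ T, w x) from (Complex.mul_conj _).symm]
    rw [map_sum, Finset.sum_mul_sum]
    refine Finset.sum_congr rfl fun w _ => Finset.sum_congr rfl fun w' _ => ?_
    rw [AddChar.mul_apply, AddChar.inv_apply, AddChar.map_neg_eq_conj]
  -- Step B : sum over all of G
  have hBnat : Fintype.card G * T.card = T.card ^ 2 * S.card := by
    have lhsC : ((∑ x : G, ‖∑ w ∈ T, w x‖ ^ 2 : ℝ) : ℂ)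
        = ((Fintype.card G * T.card : ℕ) : ℂ) := by
      rw [Complex.ofReal_sum]
      rw [Finset.sum_congr rfl fun x _ => habs x]
      rw [Finset.sum_comm]
      have : ∀ w ∈ T, ∑ x : G, ∑ w' ∈ T, (w * w'⁻¹) x = (Fintype.card G : ℂ) := by
        intro w hw
        rw [Finset.sum_comm]
        rw [Finset.sum_congr rfl fun w' _ => sum10_orth w w']
        rw [Finset.sum_ite_eq T w fun _ => (Fintype.card G : ℂ)]
        simp [hw]
      rw [Finset.sum_congr rfl this, Finset.sum_const, nsmul_eq_mul]
      push_cast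
      ring
    have lhsR : (∑ x : G, ‖∑ w ∈ T, w x‖ ^ 2 : ℝ)
        = (Fintype.card G * T.card : ℕ) := by exact_mod_cast lhsC
    have hN : ∑ x : G, (((S ×ˢ S).filter fun p => x = p.1 - p.2).card : ℝ)
        = (S.card : ℝ) ^ 2 := by
      have : ∑ x : G, ((S ×ˢ S).filter fun p => x = p.1 - p.2).card = S.card ^ 2 := by
        simp_rw [Finset.card_filter]
        rw [Finset.sum_comm]
        simp [Finset.card_product, sq]
      exact_mod_cast this
    have rhsR : ∑ x : G, ((T.card : ℝ) ^ 2 / (S.card : ℝ) *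
        ((S ×ˢ S).filter fun p => x = p.1 - p.2).card) = (T.card : ℝ) ^ 2 * S.card := by
      rw [← Finset.mul_sum, hN]
      field_simp
    have hds : ∑ x : G, ‖∑ w ∈ T, w x‖ ^ 2
        = ∑ x : G, ((T.card : ℝ) ^ 2 / (S.card : ℝ) *
          ((S ×ˢ S).filter fun p => x = p.1 - p.2).card) :=
      Finset.sum_congr rfl fun x _ => hdual x
    have : ((Fintype.card G * T.card : ℕ) : ℝ) = ((T.card ^ 2 * S.card : ℕ) : ℝ) := by
      rw [← lhsR, hds, rhsR]
      push_cast; ring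
    exact_mod_cast this
  -- Step C : sum over H
  have hCnat : Fintype.card H * (∑ w ∈ T, m (φ w)) = T.card ^ 2 * S.card := by
    have lhsC : ((∑ x : H, ‖∑ w ∈ T, w (x : G)‖ ^ 2 : ℝ) : ℂ)
        = ((Fintype.card H * (∑ w ∈ T, m (φ w)) : ℕ) : ℂ) := by
      rw [Complex.ofReal_sum]
      have hstep : ∑ x : H, ((‖∑ w ∈ T, w (x : G)‖ ^ 2 : ℝ) : ℂ)
          = ∑ x : H, ∑ w ∈ T, ∑ w' ∈ T, (w * w'⁻¹) (x : G) :=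
        Finset.sum_congr rfl fun x _ => habs (x : G)
      rw [hstep]
      rw [Finset.sum_comm]
      have : ∀ w ∈ T, ∑ x : H, ∑ w' ∈ T, (w * w'⁻¹) (x : G)
          = (m (φ w) : ℂ) * (Fintype.card H : ℂ) := by
        intro w hw
        rw [Finset.sum_comm]
        have h1 : ∀ w' ∈ T, ∑ x : H, (w * w'⁻¹) (x : G)
            = if φ w' = φ w then (Fintype.card H : ℂ) else 0 := by
          intro w' _
          have h2 : ∀ x : H, (w * w'⁻¹) (x : G) = ((φ w) * (φ w')⁻¹) x := by
            intro x
            simp [hφ, AddChar.mul_apply, AddChar.inv_apply]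
          rw [Finset.sum_congr rfl fun x _ => h2 x, sum10_orth (φ w) (φ w')]
          simp [eq_comm]
        rw [Finset.sum_congr rfl h1, ← Finset.sum_filter, Finset.sum_const, nsmul_eq_mul]
      rw [Finset.sum_congr rfl this]
      rw [← Finset.sum_mul]
      push_cast
      ring
    have lhsR : (∑ x : H, ‖∑ w ∈ T, w (x : G)‖ ^ 2 : ℝ)
        = ((Fintype.card H * (∑ w ∈ T, m (φ w)) : ℕ) : ℝ) := by exact_mod_cast lhsC
    have hN : ∑ x : H, (((S ×ˢ S).filter fun p => (x : G) = p.1 - p.2).card : ℝ)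
        = (S.card : ℝ) ^ 2 := by
      have : ∑ x : H, ((S ×ˢ S).filter fun p => (x : G) = p.1 - p.2).card = S.card ^ 2 := by
        simp_rw [Finset.card_filter]
        rw [Finset.sum_comm]
        have : ∀ p ∈ S ×ˢ S, ∑ x : H, (if (x : G) = p.1 - p.2 then 1 else 0) = 1 := by
          intro p hp
          have hp1 := (Finset.mem_product.1 hp).1
          have hp2 := (Finset.mem_product.1 hp).2
          have hmem : p.1 - p.2 ∈ H := H.sub_mem (hSH _ hp1) (hSH _ hp2)
          have hcond : ∀ x : H, ((x : G) = p.1 - p.2) = (x = ⟨p.1 - p.2, hmem⟩) := by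
            intro x; simp [Subtype.ext_iff]
          simp_rw [hcond]
          simp
        rw [Finset.sum_congr rfl this]
        simp [Finset.card_product, sq]
      exact_mod_cast this
    have rhsR : ∑ x : H, ((T.card : ℝ) ^ 2 / (S.card : ℝ) *
        ((S ×ˢ S).filter fun p => (x : G) = p.1 - p.2).card) = (T.card : ℝ) ^ 2 * S.card := by
      rw [← Finset.mul_sum, hN]
      field_simp
    have hds : ∑ x : H, ‖∑ w ∈ T, w (x : G)‖ ^ 2
        = ∑ x : H, ((T.card : ℝ) ^ 2 / (S.card : ℝ) *
          ((S ×ˢ S).filter fun p => (x : G) = p.1 - p.2).card) :=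
      Finset.sum_congr rfl fun x _ => hdual (x : G)
    have : ((Fintype.card H * (∑ w ∈ T, m (φ w)) : ℕ) : ℝ) = ((T.card ^ 2 * S.card : ℕ) : ℝ) := by
      rw [← lhsR, hds, rhsR]
      push_cast; ring
    exact_mod_cast this
  -- fiberwise identities
  have hfib : ∑ w ∈ T, m (φ w) = ∑ y : AddChar H ℂ, m y ^ 2 := by
    rw [← Finset.sum_fiberwise T φ (fun w => m (φ w))]
    refine Finset.sum_congr rfl fun y _ => ?_
    have : ∀ w ∈ T.filter fun w => φ w = y, m (φ w) = m y := by
      intro w hw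
      rw [(Finset.mem_filter.1 hw).2]
    rw [Finset.sum_congr rfl this, Finset.sum_const, smul_eq_mul, sq]
  have hTcard : T.card = ∑ y : AddChar H ℂ, m y :=
    Finset.card_eq_sum_card_fiberwise fun w _ => Finset.mem_univ (φ w)
  -- combine: card H * ∑ m² = card H * index * T.card
  have hGH : Fintype.card G = Fintype.card H * H.index := by
    have := AddSubgroup.index_mul_card H
    rw [Nat.card_eq_fintype_card, Nat.card_eq_fintype_card] at this
    rw [← this, mul_comm]
  have hkey : ∑ y : AddChar H ℂ, m y ^ 2 = H.index * T.card := by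
    have h1 : Fintype.card H * (∑ y : AddChar H ℂ, m y ^ 2)
        = Fintype.card H * (H.index * T.card) := by
      rw [← hfib, hCnat, ← hBnat, hGH]; ring
    exact Nat.eq_of_mul_eq_mul_left Fintype.card_pos h1
  have hkey2 : ∑ y : AddChar H ℂ, m y ^ 2 = ∑ y : AddChar H ℂ, m y * H.index := by
    rw [hkey, ← Finset.sum_mul, ← hTcard]; ring
  have hpt : ∀ y ∈ (univ : Finset (AddChar H ℂ)), m y ^ 2 = m y * H.index :=
    (Finset.sum_eq_sum_iff_of_le fun y _ => by
      rw [sq]; exact Nat.mul_le_mul le_rfl (hle y)).1 hkey2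
  have hy := hpt y₀ (Finset.mem_univ y₀)
  rcases Nat.eq_zero_or_pos (m y₀) with h0 | hpos
  · left; exact h0
  · right
    have h2 : m y₀ * m y₀ = m y₀ * H.index := by rw [← sq, hy]
    exact Nat.eq_of_mul_eq_mul_left hpos h2
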